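/- Let f : ℕ∞ → ℕ be the bijection with f(∞) = 0 and f(i) = i+1 for i ∈ ℕ, extended componentwise to vectors in ℕ∞^d and to sets of such vectors. Then for any set C ⊆ ℕ∞^d, the image f(C) ⊆ ℕ^d is semi-linear if and only if C is semi-linear. -/

import Mathlib

/-! Common definitions: semi-linear sets, Parikh automata on finite and infinite words. -/

/-- The linear set with base vector `b` and finite set `P` of period vectors. -/
def LinSet {d : ℕ} {M : Type} [AddCommMonoid M] (b : Fin d → M)
    (P : Finset (Fin d → M)) : Set (Fin d → M) :=
  {v | ∃ z : (Fin d → M) → ℕ, v = b + ∑ p ∈ P, z p • p}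

/-- A set is semi-linear if it is a finite union of linear sets. -/
def SemiLin {d : ℕ} {M : Type} [AddCommMonoid M] (S : Set (Fin d → M)) : Prop :=
  ∃ (n : ℕ) (b : Fin n → Fin d → M) (P : Fin n → Finset (Fin d → M)),
    S = ⋃ i, LinSet (b i) (P i)

/-- The length-`n` prefix of an infinite word. -/
def pref {S : Type} (α : ℕ → S) (n : ℕ) : List S := List.ofFn fun i : Fin n => α i.1

/-- An infinite word is ultimately periodic if it has the form `u v^ω`. -/
def UltimatelyPeriodic {S : Type} (α : ℕ → S) : Prop :=
  ∃ n p, 0 < p ∧ ∀ i, n ≤ i → α (i + p) = α i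

/-- The finite infix `α[m+1 : n]` (0-indexed positions `m, …, n-1`). -/
def infixSeg {S : Type} (α : ℕ → S) (m n : ℕ) : List S :=
  List.ofFn fun j : Fin (n - m) => α (m + j.1)

/-- `W^ω`: infinite concatenations of non-empty words from `W`. -/
def omegaPow {S : Type} (W : Set (List S)) : Set (ℕ → S) :=
  {α | ∃ k : ℕ → ℕ, k 0 = 0 ∧ StrictMono k ∧ ∀ i, infixSeg α (k i) (k (i + 1)) ∈ W}

/-- A deterministic Parikh automaton with states `Q`, alphabet `S`, dimension `d`,
and a constraint set `C` of vectors over `M` (`M = ℕ`, or `M = ℕ∞` for limit PA). -/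
structure DetPA (Q S : Type) (d : ℕ) (M : Type) where
  init : Q
  trans : Q → S → (Fin d → ℕ) × Q
  acc : Q → Prop
  C : Set (Fin d → M)

namespace DetPA

variable {Q S M : Type} {d : ℕ}

/-- The run of `A` from state `p` on the infinite word `α`: state after `i` letters. -/
def run (A : DetPA Q S d M) (p : Q) (α : ℕ → S) : ℕ → Q
  | 0 => p
  | i + 1 => (A.trans (A.run p α i) (α i)).2

/-- The state of the unique run of `A` on `α` after `i` letters. -/
def stateAt (A : DetPA Q S d M) (α : ℕ → S) : ℕ → Q := A.run A.init α

/-- The vector of the `i`-th transition of the unique run of `A` on `α`. -/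
def step (A : DetPA Q S d M) (α : ℕ → S) (i : ℕ) : Fin d → ℕ :=
  (A.trans (A.stateAt α i) (α i)).1

/-- Sum of transition vectors of the run of `A` on `α` on positions `m, …, n-1`. -/
def vecSum (A : DetPA Q S d M) (α : ℕ → S) (m n : ℕ) : Fin d → ℕ :=
  ∑ i ∈ Finset.Ico m n, A.step α i

/-- The state reached when reading a finite word from state `p`. -/
def runList (A : DetPA Q S d M) : Q → List S → Q
  | p, [] => p
  | p, a :: w => A.runList (A.trans p a).2 w

/-- The sum of transition vectors collected when reading a finite word from state `p`. -/
def sumList (A : DetPA Q S d M) : Q → List S → (Fin d → ℕ)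
  | _, [] => 0
  | p, a :: w => (A.trans p a).1 + A.sumList (A.trans p a).2 w

/-- Finite-word acceptance: end in an accepting state with vector sum in `C`. -/
def AcceptsWord (A : DetPA Q S d ℕ) (w : List S) : Prop :=
  A.acc (A.runList A.init w) ∧ A.sumList A.init w ∈ A.C

/-- The run visits accepting states infinitely often. -/
def InfAcc (A : DetPA Q S d M) (α : ℕ → S) : Prop :=
  ∀ n, ∃ i, n ≤ i ∧ A.acc (A.stateAt α i)

/-- Reachability condition. -/
def ReachAccept (A : DetPA Q S d ℕ) (α : ℕ → S) : Prop :=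
  ∃ i, 1 ≤ i ∧ A.acc (A.stateAt α i) ∧ A.vecSum α 0 i ∈ A.C

/-- Reachability-regular condition. -/
def ReachRegAccept (A : DetPA Q S d ℕ) (α : ℕ → S) : Prop :=
  A.ReachAccept α ∧ A.InfAcc α

/-- Büchi condition. -/
def BuchiAccept (A : DetPA Q S d ℕ) (α : ℕ → S) : Prop :=
  ∀ n, ∃ i, n ≤ i ∧ 1 ≤ i ∧ A.acc (A.stateAt α i) ∧ A.vecSum α 0 i ∈ A.C

/-- Weak reset condition. -/
def WeakResetAccept (A : DetPA Q S d ℕ) (α : ℕ → S) : Prop :=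
  ∃ k : ℕ → ℕ, k 0 = 0 ∧ StrictMono k ∧
    (∀ i, A.acc (A.stateAt α (k (i + 1)))) ∧
    (∀ i, A.vecSum α (k i) (k (i + 1)) ∈ A.C)

/-- Strong reset condition: accepting states occur infinitely often, and between any
two consecutive accepting positions (and from position `0` to the first one) the
collected vector lies in `C`. -/
def StrongResetAccept (A : DetPA Q S d ℕ) (α : ℕ → S) : Prop :=
  (∀ n, ∃ i, n ≤ i ∧ 1 ≤ i ∧ A.acc (A.stateAt α i)) ∧
  ∀ m n, m < n → (m = 0 ∨ (1 ≤ m ∧ A.acc (A.stateAt α m))) →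
    A.acc (A.stateAt α n) →
    (∀ j, m < j → j < n → ¬ A.acc (A.stateAt α j)) →
    A.vecSum α m n ∈ A.C

/-- The extended Parikh image of the unique run of `A` on `α`: componentwise the
supremum in `ℕ∞` of the partial sums (`∞` iff the component is incremented
infinitely often, else the finite total sum). -/
noncomputable def limImage (A : DetPA Q S d M) (α : ℕ → S) : Fin d → ℕ∞ :=
  fun j => ⨆ n, (A.vecSum α 0 n j : ℕ∞)

/-- Limit condition. -/
def LimitAccept (A : DetPA Q S d ℕ∞) (α : ℕ → S) : Prop :=
  A.InfAcc α ∧ A.limImage α ∈ A.C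

end DetPA

/-- `U` is recognized by a deterministic finite-word Parikh automaton. -/
def DetPARecogFin {S : Type} (U : Set (List S)) : Prop :=
  ∃ (d : ℕ) (Q : Type) (_ : Finite Q) (A : DetPA Q S d ℕ),
    SemiLin A.C ∧ U = {w | A.AcceptsWord w}

/-- `L` is recognized by a deterministic reachability PA. -/
def DetReachRecog {S : Type} (L : Set (ℕ → S)) : Prop :=
  ∃ (d : ℕ) (Q : Type) (_ : Finite Q) (A : DetPA Q S d ℕ),
    SemiLin A.C ∧ L = {α | A.ReachAccept α}

/-- `L` is recognized by a deterministic reachability-regular PA. -/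
def DetReachRegRecog {S : Type} (L : Set (ℕ → S)) : Prop :=
  ∃ (d : ℕ) (Q : Type) (_ : Finite Q) (A : DetPA Q S d ℕ),
    SemiLin A.C ∧ L = {α | A.ReachRegAccept α}

/-- `L` is recognized by a deterministic Büchi PA. -/
def DetBuchiRecog {S : Type} (L : Set (ℕ → S)) : Prop :=
  ∃ (d : ℕ) (Q : Type) (_ : Finite Q) (A : DetPA Q S d ℕ),
    SemiLin A.C ∧ L = {α | A.BuchiAccept α}

/-- `L` is recognized by a deterministic weak reset PA. -/
def DetWeakResetRecog {S : Type} (L : Set (ℕ → S)) : Prop :=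
  ∃ (d : ℕ) (Q : Type) (_ : Finite Q) (A : DetPA Q S d ℕ),
    SemiLin A.C ∧ L = {α | A.WeakResetAccept α}

/-- `L` is recognized by a deterministic strong reset PA. -/
def DetStrongResetRecog {S : Type} (L : Set (ℕ → S)) : Prop :=
  ∃ (d : ℕ) (Q : Type) (_ : Finite Q) (A : DetPA Q S d ℕ),
    SemiLin A.C ∧ L = {α | A.StrongResetAccept α}

/-- `L` is recognized by a deterministic limit PA (constraint set over `ℕ∞`). -/
def DetLimitRecog {S : Type} (L : Set (ℕ → S)) : Prop :=
  ∃ (d : ℕ) (Q : Type) (_ : Finite Q) (A : DetPA Q S d ℕ∞),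
    SemiLin A.C ∧ L = {α | A.LimitAccept α}

/-- A nondeterministic Parikh automaton. -/
structure NPA (Q S : Type) (d : ℕ) where
  init : Q
  trans : Q → S → (Fin d → ℕ) → Q → Prop
  acc : Q → Prop
  C : Set (Fin d → ℕ)

namespace NPA

variable {Q S : Type} {d : ℕ}

/-- `r, v` form a run of `A` on the infinite word `α`. -/
def IsRun (A : NPA Q S d) (α : ℕ → S) (r : ℕ → Q) (v : ℕ → Fin d → ℕ) : Prop :=
  r 0 = A.init ∧ ∀ i, A.trans (r i) (α i) (v i) (r (i + 1))

/-- Partial sums of the vectors of a run over positions `m, …, n-1`. -/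
def partSum (v : ℕ → Fin d → ℕ) (m n : ℕ) : Fin d → ℕ := ∑ i ∈ Finset.Ico m n, v i

/-- Nondeterministic reachability-regular acceptance. -/
def ReachRegAccept (A : NPA Q S d) (α : ℕ → S) : Prop :=
  ∃ r v, A.IsRun α r v ∧ (∃ i, 1 ≤ i ∧ A.acc (r i) ∧ partSum v 0 i ∈ A.C) ∧
    ∀ n, ∃ i, n ≤ i ∧ A.acc (r i)

/-- Nondeterministic strong reset acceptance. -/
def StrongResetAccept (A : NPA Q S d) (α : ℕ → S) : Prop :=
  ∃ r v, A.IsRun α r v ∧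
    (∀ n, ∃ i, n ≤ i ∧ 1 ≤ i ∧ A.acc (r i)) ∧
    ∀ m n, m < n → (m = 0 ∨ (1 ≤ m ∧ A.acc (r m))) → A.acc (r n) →
      (∀ j, m < j → j < n → ¬ A.acc (r j)) → partSum v m n ∈ A.C

/-- Nondeterministic weak reset acceptance. -/
def WeakResetAccept (A : NPA Q S d) (α : ℕ → S) : Prop :=
  ∃ r v, A.IsRun α r v ∧ ∃ k : ℕ → ℕ, k 0 = 0 ∧ StrictMono k ∧
    (∀ i, A.acc (r (k (i + 1)))) ∧ (∀ i, partSum v (k i) (k (i + 1)) ∈ A.C)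

/-- Runs of a nondeterministic PA on a finite word, from state `p` to state `q`
collecting vector sum `v`. -/
def ListRun (A : NPA Q S d) : Q → List S → (Fin d → ℕ) → Q → Prop
  | p, [], v, q => q = p ∧ v = 0
  | p, a :: w, v, q => ∃ u p', A.trans p a u p' ∧ ∃ v', A.ListRun p' w v' q ∧ v = u + v'

/-- Finite-word acceptance for a nondeterministic PA. -/
def AcceptsWord (A : NPA Q S d) (w : List S) : Prop :=
  ∃ v q, A.ListRun A.init w v q ∧ A.acc q ∧ v ∈ A.C

end NPA

/-- `L` is recognized by a (nondeterministic) reachability-regular PA. -/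
def NPAReachRegRecog {S : Type} (L : Set (ℕ → S)) : Prop :=
  ∃ (d : ℕ) (Q : Type) (_ : Finite Q) (A : NPA Q S d),
    SemiLin A.C ∧ L = {α | A.ReachRegAccept α}

/-- `L` is recognized by a (nondeterministic) strong reset PA. -/
def NPAStrongResetRecog {S : Type} (L : Set (ℕ → S)) : Prop :=
  ∃ (d : ℕ) (Q : Type) (_ : Finite Q) (A : NPA Q S d),
    SemiLin A.C ∧ L = {α | A.StrongResetAccept α}

/-- `L` is recognized by a (nondeterministic) weak reset PA. -/
def NPAWeakResetRecog {S : Type} (L : Set (ℕ → S)) : Prop :=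
  ∃ (d : ℕ) (Q : Type) (_ : Finite Q) (A : NPA Q S d),
    SemiLin A.C ∧ L = {α | A.WeakResetAccept α}

/-- A nondeterministic Büchi automaton. -/
structure NBA (Q S : Type) where
  init : Q
  trans : Q → S → Q → Prop
  acc : Q → Prop

/-- Büchi acceptance. -/
def NBA.Accepts {Q S : Type} (B : NBA Q S) (α : ℕ → S) : Prop :=
  ∃ r : ℕ → Q, r 0 = B.init ∧ (∀ i, B.trans (r i) (α i) (r (i + 1))) ∧
    ∀ n, ∃ i, n ≤ i ∧ B.acc (r i)

/-- `L` is ω-regular: recognized by a nondeterministic Büchi automaton. -/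
def OmegaRegular {S : Type} (L : Set (ℕ → S)) : Prop :=
  ∃ (Q : Type) (_ : Finite Q) (B : NBA Q S), L = {α | B.Accepts α}

/-! Auxiliary lemmas for STATEMENT 0. -/

private lemma semiLin_of_biUnion_finset {d : ℕ} {M : Type} [AddCommMonoid M] {ι : Type}
    (t : Finset ι) (β : ι → Fin d → M) (γ : ι → Finset (Fin d → M)) :
    SemiLin (⋃ i ∈ t, LinSet (β i) (γ i)) := by
  classical
  refine ⟨t.card, fun k => β (t.equivFin.symm k), fun k => γ (t.equivFin.symm k), ?_⟩
  ext v
  simp only [Set.mem_iUnion]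
  constructor
  · rintro ⟨i, hi, hv⟩
    exact ⟨t.equivFin ⟨i, hi⟩, by simpa using hv⟩
  · rintro ⟨k, hv⟩
    exact ⟨_, (t.equivFin.symm k).2, hv⟩

private lemma image_linSet_eq {M N : Type} [AddCommMonoid M] [AddCommMonoid N] {d : ℕ}
    [DecidableEq (Fin d → N)]
    (F : (Fin d → M) → (Fin d → N)) (tr : (Fin d → M) → (Fin d → M) → (Fin d → N))
    (key : ∀ (b : Fin d → M) (T : Finset (Fin d → M)) (w : (Fin d → M) → ℕ),
      F ((b + ∑ p ∈ T, p) + ∑ p ∈ T, w p • p)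
        = F (b + ∑ p ∈ T, p) + ∑ p ∈ T, w p • tr (b + ∑ p ∈ T, p) p)
    (b : Fin d → M) (P : Finset (Fin d → M)) :
    F '' LinSet b P
      = ⋃ T ∈ P.powerset,
          LinSet (F (b + ∑ p ∈ T, p)) (T.image (tr (b + ∑ p ∈ T, p))) := by
  classical
  ext v
  simp only [Set.mem_image, Set.mem_iUnion, LinSet, Set.mem_setOf_eq, Finset.mem_powerset]
  constructor
  · rintro ⟨u, ⟨z, rfl⟩, rfl⟩
    refine ⟨P.filter (fun p => z p ≠ 0), Finset.filter_subset _ _, ?_⟩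
    set T := P.filter (fun p => z p ≠ 0) with hT
    set x := b + ∑ p ∈ T, p with hx
    refine ⟨fun u => ∑ p ∈ T.filter (fun q => tr x q = u), (z p - 1), ?_⟩
    have h1 : b + ∑ p ∈ P, z p • p = x + ∑ p ∈ T, (z p - 1) • p := by
      rw [hx, add_assoc, ← Finset.sum_add_distrib]
      congr 1
      rw [← Finset.sum_filter_of_ne (p := fun p => z p ≠ 0)
        (fun p _ h => fun h0 => h (by simp [h0]))]
      refine Finset.sum_congr rfl (fun p hp => ?_)
      have hz : 1 + (z p - 1) = z p := by
        have := (Finset.mem_filter.mp hp).2; omega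
      calc z p • p = (1 + (z p - 1)) • p := by rw [hz]
        _ = p + (z p - 1) • p := by rw [add_nsmul, one_nsmul]
    rw [h1, key]
    congr 1
    refine (Finset.sum_image' (fun j => (z j - 1) • tr x j) fun c hc => ?_).symm
    rw [← Finset.sum_nsmul_assoc]
    exact Finset.sum_congr rfl fun j hj => by rw [(Finset.mem_filter.mp hj).2]
  · rintro ⟨T, hT, z, rfl⟩
    set x := b + ∑ p ∈ T, p with hx
    set rep : (Fin d → N) → (Fin d → M) := fun u =>
      if h : ∃ p, p ∈ T ∧ tr x p = u then h.choose else 0 with hrep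
    have hrep_mem : ∀ u ∈ T.image (tr x), rep u ∈ T ∧ tr x (rep u) = u := by
      intro u hu
      obtain ⟨p, hp, hpu⟩ := Finset.mem_image.mp hu
      have h : ∃ p, p ∈ T ∧ tr x p = u := ⟨p, hp, hpu⟩
      rw [hrep]; simp only [dif_pos h]
      exact h.choose_spec
    set w : (Fin d → M) → ℕ := fun p =>
      ∑ u ∈ (T.image (tr x)).filter (fun u => rep u = p), z u with hw
    have hsum : ∑ u ∈ T.image (tr x), z u • u = ∑ p ∈ T, w p • tr x p := by
      rw [← Finset.sum_fiberwise_of_maps_to (fun u hu => (hrep_mem u hu).1)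
        (fun u => z u • u)]
      refine Finset.sum_congr rfl (fun p hp => ?_)
      rw [hw, ← Finset.sum_nsmul_assoc]
      refine Finset.sum_congr rfl (fun u hu => ?_)
      have h2 := Finset.mem_filter.mp hu
      rw [← h2.2, (hrep_mem u h2.1).2]
    have h2 : ∑ p ∈ P, (if p ∈ T then w p + 1 else 0) • p = ∑ p ∈ T, (w p + 1) • p := by
      rw [← Finset.sum_subset hT (fun p _ hp => by rw [if_neg hp, zero_nsmul])]
      exact Finset.sum_congr rfl fun p hp => by rw [if_pos hp]
    refine ⟨x + ∑ p ∈ T, w p • p, ⟨fun p => if p ∈ T then w p + 1 else 0, ?_⟩, ?_⟩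
    · rw [h2, hx, add_assoc, ← Finset.sum_add_distrib]
      congr 1
      refine Finset.sum_congr rfl (fun p hp => ?_)
      rw [add_nsmul, one_nsmul]
      exact add_comm _ _
    · rw [hx, key, ← hx, hsum]

private lemma semiLin_image {M N : Type} [AddCommMonoid M] [AddCommMonoid N] {d : ℕ}
    (F : (Fin d → M) → (Fin d → N)) (tr : (Fin d → M) → (Fin d → M) → (Fin d → N))
    (key : ∀ (b : Fin d → M) (T : Finset (Fin d → M)) (w : (Fin d → M) → ℕ),
      F ((b + ∑ p ∈ T, p) + ∑ p ∈ T, w p • p)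
        = F (b + ∑ p ∈ T, p) + ∑ p ∈ T, w p • tr (b + ∑ p ∈ T, p) p)
    {C : Set (Fin d → M)} (hC : SemiLin C) : SemiLin (F '' C) := by
  classical
  obtain ⟨n, b, P, rfl⟩ := hC
  rw [Set.image_iUnion]
  have h2 := semiLin_of_biUnion_finset
    ((Finset.univ : Finset (Fin n)).sigma fun i => (P i).powerset)
    (fun s => F (b s.1 + ∑ p ∈ s.2, p))
    (fun s => s.2.image (tr (b s.1 + ∑ p ∈ s.2, p)))
  have heq : (⋃ i, F '' LinSet (b i) (P i))
      = ⋃ s ∈ (Finset.univ : Finset (Fin n)).sigma fun i => (P i).powerset,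
          LinSet (F (b s.1 + ∑ p ∈ s.2, p)) (s.2.image (tr (b s.1 + ∑ p ∈ s.2, p))) := by
    ext v
    simp only [Set.mem_iUnion, Finset.mem_sigma, Finset.mem_univ, true_and,
      Finset.mem_powerset]
    constructor
    · rintro ⟨i, hv⟩
      rw [image_linSet_eq F tr key] at hv
      simp only [Set.mem_iUnion, Finset.mem_powerset] at hv
      obtain ⟨T, hT, hv⟩ := hv
      exact ⟨⟨i, T⟩, hT, hv⟩
    · rintro ⟨⟨i, T⟩, hT, hv⟩
      refine ⟨i, ?_⟩
      rw [image_linSet_eq F tr key]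
      simp only [Set.mem_iUnion, Finset.mem_powerset]
      exact ⟨T, hT, hv⟩
  rw [heq]
  exact h2

private def gOfNat : ℕ → ℕ∞
  | 0 => ⊤
  | m + 1 => (m : ℕ∞)

@[simp] private lemma gOfNat_zero : gOfNat 0 = ⊤ := rfl
@[simp] private lemma gOfNat_succ (m : ℕ) : gOfNat (m + 1) = (m : ℕ∞) := rfl

private def trB {d : ℕ} (x p : Fin d → ℕ∞) : Fin d → ℕ :=
  fun j => if x j = ⊤ then 0 else (p j).toNat

private def trA {d : ℕ} (_x p : Fin d → ℕ) : Fin d → ℕ∞ :=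
  fun j => (p j : ℕ∞)

private lemma keyB' {d : ℕ} (f : ℕ∞ → ℕ) (hf_top : f ⊤ = 0)
    (hf_nat : ∀ i : ℕ, f (i : ℕ∞) = i + 1)
    (b : Fin d → ℕ∞) (T : Finset (Fin d → ℕ∞)) (w : (Fin d → ℕ∞) → ℕ) :
    (fun v : Fin d → ℕ∞ => f ∘ v) ((b + ∑ p ∈ T, p) + ∑ p ∈ T, w p • p)
      = (fun v : Fin d → ℕ∞ => f ∘ v) (b + ∑ p ∈ T, p)
        + ∑ p ∈ T, w p • trB (b + ∑ p ∈ T, p) p := by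
  funext j
  simp only [Function.comp_apply, Pi.add_apply, Finset.sum_apply, Pi.smul_apply, smul_eq_mul,
    trB]
  by_cases hbs : b j + ∑ p ∈ T, p j = ⊤
  · simp [hbs, hf_top, top_add]
  · have hparts := WithTop.add_ne_top.mp hbs
    have hp : ∀ p ∈ T, p j ≠ ⊤ := by
      intro p hpT hc
      exact hparts.2 (WithTop.sum_eq_top.mpr ⟨p, hpT, hc⟩)
    obtain ⟨m, hm⟩ : ∃ m : ℕ, b j + ∑ p ∈ T, p j = (m : ℕ∞) :=
      ⟨(b j + ∑ p ∈ T, p j).toNat, (ENat.coe_toNat hbs).symm⟩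
    have hS : ∑ p ∈ T, w p • p j = ((∑ p ∈ T, w p * (p j).toNat : ℕ) : ℕ∞) := by
      rw [Nat.cast_sum]
      refine Finset.sum_congr rfl fun p hpT => ?_
      have h1 : ((p j).toNat : ℕ∞) = p j := ENat.coe_toNat (hp p hpT)
      rw [← h1, nsmul_eq_mul, Nat.cast_mul]
      norm_cast
    simp only [if_neg hbs]
    rw [hS, hm, ← Nat.cast_add, hf_nat, hf_nat]
    ring

private lemma keyA' {d : ℕ} (b : Fin d → ℕ) (T : Finset (Fin d → ℕ)) (w : (Fin d → ℕ) → ℕ) :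
    (fun v : Fin d → ℕ => gOfNat ∘ v) ((b + ∑ p ∈ T, p) + ∑ p ∈ T, w p • p)
      = (fun v : Fin d → ℕ => gOfNat ∘ v) (b + ∑ p ∈ T, p)
        + ∑ p ∈ T, w p • trA (b + ∑ p ∈ T, p) p := by
  funext j
  simp only [Function.comp_apply, Pi.add_apply, Finset.sum_apply, Pi.smul_apply, smul_eq_mul,
    trA]
  by_cases h0 : b j + ∑ p ∈ T, p j = 0
  · have hz : ∀ p ∈ T, p j = 0 := by
      intro p hpT
      have hs : ∑ p ∈ T, p j = 0 := Nat.eq_zero_of_add_eq_zero_left h0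
      exact (Finset.sum_eq_zero_iff.mp hs) p hpT
    have h1 : ∑ p ∈ T, w p * p j = 0 :=
      Finset.sum_eq_zero fun p hpT => by rw [hz p hpT, mul_zero]
    rw [h1, add_zero, h0, gOfNat_zero, top_add]
  · obtain ⟨m, hm⟩ := Nat.exists_eq_succ_of_ne_zero h0
    have hS : ∑ p ∈ T, w p • ((p j : ℕ∞)) = ((∑ p ∈ T, w p * p j : ℕ) : ℕ∞) := by
      rw [Nat.cast_sum]
      refine Finset.sum_congr rfl fun p hpT => ?_
      rw [nsmul_eq_mul, Nat.cast_mul]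
    rw [hm, hS, show m + 1 + ∑ p ∈ T, w p * p j = (m + ∑ p ∈ T, w p * p j) + 1 by ring,
      gOfNat_succ, gOfNat_succ, Nat.cast_add]

/-- with `f : ℕ∞ → ℕ` the bijection sending `∞ ↦ 0` and `i ↦ i+1`,
extended componentwise, a set `C ⊆ ℕ∞^d` is semi-linear iff its image `f(C) ⊆ ℕ^d` is. -/
theorem image_semiLin_iff_semiLin {d : ℕ} (f : ℕ∞ → ℕ)
    (hf_top : f ⊤ = 0) (hf_nat : ∀ i : ℕ, f (i : ℕ∞) = i + 1)
    (C : Set (Fin d → ℕ∞)) :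
    SemiLin ((fun v : Fin d → ℕ∞ => f ∘ v) '' C) ↔ SemiLin C := by
  constructor
  · intro h
    have hid : (fun v : Fin d → ℕ => gOfNat ∘ v) '' ((fun v : Fin d → ℕ∞ => f ∘ v) '' C)
        = C := by
      rw [Set.image_image]
      have hcomp : ∀ v : Fin d → ℕ∞, gOfNat ∘ (f ∘ v) = v := by
        intro v; funext j
        simp only [Function.comp_apply]
        induction v j using ENat.recTopCoe with
        | top => rw [hf_top, gOfNat_zero]
        | coe m => rw [hf_nat, gOfNat_succ]
      simp only [hcomp, Set.image_id']
    rw [← hid]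
    exact semiLin_image _ trA keyA' h
  · intro h
    exact semiLin_image _ trB (keyB' f hf_top hf_nat) h
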